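/- The number of permutations of {1,...,2n} equals the sum over pairs (α, β), where α is a Dyck path of length 2n and β is a Dyck path of length 2n+2, of the product ∏_{i=1}^n h_i(α)·h_i*(β), where h_i denotes the height of the i-th down step and h_i* equals h_i - 1 if there is no up step to the right of the i-th down step and h_i otherwise. -/

import Mathlib

open Finset

/-- `D ⊆ {1,…,L}` is the set of down steps of a Dyck path of length `L`:
it has `L/2` elements and every prefix has at least as many up steps as down steps. -/
def IsDyck (L : ℕ) (D : Finset ℕ) : Prop :=
  D ⊆ Finset.Icc 1 L ∧ 2 * D.card = L ∧ ∀ k ≤ L, 2 * (D.filter (· ≤ k)).card ≤ k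

instance (L : ℕ) : DecidablePred (IsDyck L) := fun D => by
  unfold IsDyck; infer_instance

/-- The collection of all Dyck paths (encoded by their down-step sets) of length `L`. -/
def dyckPaths (L : ℕ) : Finset (Finset ℕ) :=
  (Finset.Icc 1 L).powerset.filter (IsDyck L)

/-- The position (in `{1,…,L}`) of the `i`-th down step (`1`-indexed). -/
def dstep (D : Finset ℕ) (i : ℕ) : ℕ := (D.sort (· ≤ ·)).getD (i - 1) 0

/-- The height `h_i` of the `i`-th down step of a Dyck path:  the step goes from
`(d_i - 1, h_i)` to `(d_i, h_i - 1)`; equivalently `h_i = d_i + 1 - 2 i`. -/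
def ht (D : Finset ℕ) (i : ℕ) : ℕ := dstep D i + 1 - 2 * i

/-- The modified height `h_i^*`: equal to `h_i - 1` if there is no up step to the right of
the `i`-th down step, and to `h_i` otherwise. -/
def hstar (L : ℕ) (D : Finset ℕ) (i : ℕ) : ℕ :=
  if Finset.Ioc (dstep D i) L ⊆ D then ht D i - 1 else ht D i

/-- `crossout w k` is the pair (positions marked A, positions marked B) after `k` rounds of
the crossout procedure: in each round, first mark B at the unmarked position with the smallest
value `w i`, then mark A at the leftmost unmarked position. -/
def crossout {N : ℕ} (w : Equiv.Perm (Fin N)) : ℕ → Finset (Fin N) × Finset (Fin N)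
  | 0 => (∅, ∅)
  | k + 1 =>
    let p := crossout w k
    let u := (Finset.univ : Finset (Fin N)) \ (p.1 ∪ p.2)
    if hu : u.Nonempty then
      let b := w.symm ((u.image w).min' (hu.image _))
      if ha : (u.erase b).Nonempty then
        (insert ((u.erase b).min' ha) p.1, insert b p.2)
      else (p.1, insert b p.2)
    else p

/-- The set of positions marked A under the crossout procedure. -/
def markA {N : ℕ} (w : Equiv.Perm (Fin N)) : Finset (Fin N) := (crossout w N).1

/-- The set of positions marked B under the crossout procedure. -/
def markB {N : ℕ} (w : Equiv.Perm (Fin N)) : Finset (Fin N) := (crossout w N).2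

/-- Down-step set of Alice's path `p_A(w)`:  the values (in `{1,…,N}`) at positions marked A. -/
def pAset {N : ℕ} (w : Equiv.Perm (Fin N)) : Finset ℕ :=
  (markA w).image (fun a => Fin.val (w a) + 1)

/-- Down-step set of Bob's path `p_B(w)`:  `{b + 1 : b marked B} ∪ {N + 2}`
(positions taken in `{1,…,N}`, so `b + 1` becomes `(b : ℕ) + 2`). -/
def pBset {N : ℕ} (w : Equiv.Perm (Fin N)) : Finset ℕ :=
  insert (N + 2) ((markB w).image (fun b => Fin.val b + 2))

/-- Number of AA inversions of `w`. -/
def aaInv {N : ℕ} (w : Equiv.Perm (Fin N)) : ℕ :=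
  (Finset.univ.filter (fun p : Fin N × Fin N =>
    p.1 < p.2 ∧ w p.2 < w p.1 ∧ p.1 ∈ markA w ∧ p.2 ∈ markA w)).card

/-- Number of BB inversions of `w`. -/
def bbInv {N : ℕ} (w : Equiv.Perm (Fin N)) : ℕ :=
  (Finset.univ.filter (fun p : Fin N × Fin N =>
    p.1 < p.2 ∧ w p.2 < w p.1 ∧ p.1 ∈ markB w ∧ p.2 ∈ markB w)).card

/-- Number of AB inversions of `w`. -/
def abInv {N : ℕ} (w : Equiv.Perm (Fin N)) : ℕ :=
  (Finset.univ.filter (fun p : Fin N × Fin N =>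
    p.1 < p.2 ∧ w p.2 < w p.1 ∧ p.1 ∈ markA w ∧ p.2 ∈ markB w)).card

/-- Total number of inversions of `w`. -/
def invW {N : ℕ} (w : Equiv.Perm (Fin N)) : ℕ :=
  (Finset.univ.filter (fun p : Fin N × Fin N => p.1 < p.2 ∧ w p.2 < w p.1)).card

/-- The statistic `z(w) = #{i < j : w i < w j and i is marked B}`. -/
def zstat {N : ℕ} (w : Equiv.Perm (Fin N)) : ℕ :=
  (Finset.univ.filter (fun p : Fin N × Fin N =>
    p.1 < p.2 ∧ w p.1 < w p.2 ∧ p.1 ∈ markB w)).card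

/-- Label carried by the down step of `p_A` corresponding to the A-position `a`:
one plus the number of A-positions to the left of `a` with larger value. -/
def labelA {N : ℕ} (w : Equiv.Perm (Fin N)) (a : Fin N) : ℕ :=
  1 + ((markA w).filter (fun a' => a' < a ∧ w a < w a')).card

/-- The label sequence `ℓ` of `p_A(w)`: `ellSeq w r` is the label on the `r`-th down step. -/
def ellSeq {N : ℕ} (w : Equiv.Perm (Fin N)) (r : ℕ) : ℕ :=
  ∑ a ∈ (markA w).filter (fun a => Fin.val (w a) + 1 = dstep (pAset w) r), labelA w a

/-- Label carried by the down step of `p_B` corresponding to the B-position `b`: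
one plus the number of B-positions to the right of `b` with smaller value. -/
def labelB {N : ℕ} (w : Equiv.Perm (Fin N)) (b : Fin N) : ℕ :=
  1 + ((markB w).filter (fun b' => w b' < w b ∧ b < b')).card

/-- The label sequence `m` of `p_B(w)`: `emSeq w r` is the label on the `r`-th down step. -/
def emSeq {N : ℕ} (w : Equiv.Perm (Fin N)) (r : ℕ) : ℕ :=
  ∑ b ∈ (markB w).filter (fun b => Fin.val b + 2 = dstep (pBset w) r), labelB w b

/-- The `q`-integer `[k]_q = 1 + q + ⋯ + q^{k-1}` in `ℤ[q]`. -/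
noncomputable def qint (k : ℕ) : Polynomial ℤ := ∑ j ∈ Finset.range k, Polynomial.X ^ j

/-- The `q`-integer `[k]` in the variable `X v` of the two-variable polynomial ring. -/
noncomputable def qint2 (v : Fin 2) (k : ℕ) : MvPolynomial (Fin 2) ℤ :=
  ∑ j ∈ Finset.range k, (MvPolynomial.X v) ^ j

/-- `M` is a perfect matching of `{1,…,2n}`: a family of pairwise disjoint 2-element sets
whose union is `{1,…,2n}`. -/
def IsMatching (n : ℕ) (M : Finset (Finset ℕ)) : Prop :=
  (∀ e ∈ M, e.card = 2) ∧ (M : Set (Finset ℕ)).PairwiseDisjoint id ∧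
    M.biUnion id = Finset.Icc 1 (2 * n)

lemma sort_append_max {s : Finset ℕ} {a : ℕ} (ha : ∀ x ∈ s, x < a) :
    (insert a s).sort (· ≤ ·) = s.sort (· ≤ ·) ++ [a] := by
  have hanot : a ∉ s := fun h => lt_irrefl a (ha a h)
  haveI : IsAntisymm ℕ (· ≤ ·) := ⟨fun _ _ => le_antisymm⟩
  refine (fun hp h1 h2 => List.Perm.eq_of_pairwise' (r := (· ≤ ·)) h1 h2 hp) ?_ ?_ ?_
  · refine ((insert a s).sort_perm_toList (· ≤ ·)).trans ?_
    refine (Finset.toList_insert hanot).trans ?_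
    refine (List.Perm.cons a ((s.sort_perm_toList (· ≤ ·)).symm)).trans ?_
    exact (List.perm_append_singleton a _).symm
  · exact Finset.pairwise_sort _ _
  · rw [List.pairwise_append]
    refine ⟨Finset.pairwise_sort _ _, List.pairwise_singleton _ _, ?_⟩
    intro x hx y hy
    rw [List.mem_singleton] at hy
    subst hy
    exact (ha x ((Finset.mem_sort _).mp hx)).le

-- dstep of insert-max
lemma dstep_insert_max {s : Finset ℕ} {a : ℕ} (ha : ∀ x ∈ s, x < a) {i : ℕ}
    (hi : 1 ≤ i) (hile : i ≤ s.card) :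
    dstep (insert a s) i = dstep s i := by
  unfold dstep
  rw [sort_append_max ha]
  rw [List.getD_append]
  rw [Finset.length_sort]
  omega

lemma dstep_insert_max_top {s : Finset ℕ} {a : ℕ} (ha : ∀ x ∈ s, x < a) :
    dstep (insert a s) (s.card + 1) = a := by
  unfold dstep
  rw [sort_append_max ha, List.getD_append_right]
  · simp
  · rw [Finset.length_sort]; omega

def pref (m c : ℕ) : Finset (Finset ℕ) :=
  (Finset.Icc 1 m).powerset.filter
    (fun D => D.card = c ∧ ∀ k ≤ m, 2 * (D.filter (· ≤ k)).card ≤ k)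
lemma mem_pref {m c : ℕ} {D : Finset ℕ} :
    D ∈ pref m c ↔ D ⊆ Finset.Icc 1 m ∧ D.card = c ∧
      ∀ k ≤ m, 2 * (D.filter (· ≤ k)).card ≤ k := by
  simp [pref, and_assoc]
def WS (m c : ℕ) : ℕ := ∑ D ∈ pref m c, ∏ i ∈ Finset.Icc 1 c, ht D i
def oddDF (c : ℕ) : ℕ := ∏ i ∈ Finset.range c, (2 * i + 1)
lemma pref_zero (m : ℕ) : pref m 0 = {∅} := by
  ext D
  simp only [mem_pref, Finset.mem_singleton]
  constructor
  · rintro ⟨-, hc, -⟩; exact Finset.card_eq_zero.mp hc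
  · rintro rfl; simp
lemma WS_zero (m : ℕ) : WS m 0 = 1 := by rw [WS, pref_zero]; simp
lemma pref_nil (c : ℕ) : pref 0 (c + 1) = ∅ := by
  ext D
  simp only [mem_pref, Finset.notMem_empty, iff_false, not_and]
  intro hsub hc
  exfalso
  have : D = ∅ := by rw [← Finset.subset_empty]; simpa using hsub
  simp [this] at hc

lemma filter_le_of_mem_Icc {D : Finset ℕ} {m k : ℕ} (hsub : D ⊆ Finset.Icc 1 m)
    (hk : m ≤ k) : D.filter (· ≤ k) = D := by
  apply Finset.filter_true_of_mem
  intro x hx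
  have := hsub hx
  simp only [Finset.mem_Icc] at this
  omega

lemma filter_erase_top {D : Finset ℕ} {a k : ℕ} (hk : k < a) :
    (D.erase a).filter (· ≤ k) = D.filter (· ≤ k) := by
  ext x
  simp only [Finset.mem_filter, Finset.mem_erase]
  constructor
  · rintro ⟨⟨-, h⟩, h2⟩; exact ⟨h, h2⟩
  · rintro ⟨h, h2⟩; exact ⟨⟨by omega, h⟩, h2⟩

lemma peel (m c : ℕ) : WS (m + 1) (c + 1) = WS m (c + 1) + (m - 2 * c) * WS m c := by
  classical
  rw [WS, ← Finset.sum_filter_add_sum_filter_not (pref (m+1) (c+1)) (fun D => (m+1) ∈ D)]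
  have hnotpart : (pref (m+1) (c+1)).filter (fun D => ¬ (m+1) ∈ D) = pref m (c+1) := by
    ext D
    simp only [Finset.mem_filter, mem_pref]
    constructor
    · rintro ⟨⟨hsub, hc, hcond⟩, hnot⟩
      refine ⟨?_, hc, fun k hk => hcond k (by omega)⟩
      intro x hx
      have h1 := hsub hx
      have h2 : x ≠ m + 1 := fun h => hnot (h ▸ hx)
      simp only [Finset.mem_Icc] at h1 ⊢
      omega
    · rintro ⟨hsub, hc, hcond⟩
      have hnot : (m+1) ∉ D := by
        intro h; have := hsub h; simp only [Finset.mem_Icc] at this; omega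
      refine ⟨⟨fun x hx => ?_, hc, fun k hk => ?_⟩, hnot⟩
      · have := hsub hx; simp only [Finset.mem_Icc] at this ⊢; omega
      · rcases Nat.lt_or_ge k (m+1) with h | h
        · exact hcond k (by omega)
        · have hkm : k = m + 1 := by omega
          subst hkm
          rw [filter_le_of_mem_Icc hsub (by omega)]
          have := hcond m le_rfl
          rw [filter_le_of_mem_Icc hsub le_rfl] at this
          omega
  rw [hnotpart]
  rw [Nat.add_comm]
  congr 1
  by_cases hcase : 2 * c + 1 ≤ m
  · rw [WS, Finset.mul_sum]
    refine Finset.sum_bij' (fun D _ => D.erase (m+1)) (fun D' _ => insert (m+1) D')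
      ?_ ?_ ?_ ?_ ?_
    · intro D hD
      simp only [Finset.mem_filter, mem_pref] at hD
      obtain ⟨⟨hsub, hc, hcond⟩, hmem⟩ := hD
      rw [mem_pref]
      refine ⟨?_, ?_, ?_⟩
      · intro x hx
        rw [Finset.mem_erase] at hx
        have := hsub hx.2
        simp only [Finset.mem_Icc] at this ⊢
        omega
      · rw [Finset.card_erase_of_mem hmem, hc]; omega
      · intro k hk
        rw [filter_erase_top (by omega)]
        exact hcond k (by omega)
    · intro D' hD'
      rw [mem_pref] at hD'
      obtain ⟨hsub, hc, hcond⟩ := hD'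
      have hnot : (m+1) ∉ D' := by
        intro h; have := hsub h; simp only [Finset.mem_Icc] at this; omega
      simp only [Finset.mem_filter, mem_pref]
      refine ⟨⟨?_, ?_, ?_⟩, Finset.mem_insert_self _ _⟩
      · intro x hx
        rcases Finset.mem_insert.mp hx with rfl | hx
        · simp only [Finset.mem_Icc]; omega
        · have := hsub hx; simp only [Finset.mem_Icc] at this ⊢; omega
      · rw [Finset.card_insert_of_notMem hnot, hc]
      · intro k hk
        rcases Nat.lt_or_ge k (m+1) with h | h
        · have : (insert (m+1) D').filter (· ≤ k) = D'.filter (· ≤ k) := by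
            ext x
            simp only [Finset.mem_filter, Finset.mem_insert]
            constructor
            · rintro ⟨rfl | hx, h2⟩
              · omega
              · exact ⟨hx, h2⟩
            · rintro ⟨hx, h2⟩; exact ⟨Or.inr hx, h2⟩
          rw [this]
          exact hcond k (by omega)
        · have hkm : k = m + 1 := by omega
          subst hkm
          have hsub2 : insert (m+1) D' ⊆ Finset.Icc 1 (m+1) := by
            intro x hx
            rcases Finset.mem_insert.mp hx with rfl | hx
            · simp only [Finset.mem_Icc]; omega
            · have := hsub hx; simp only [Finset.mem_Icc] at this ⊢; omega
          rw [filter_le_of_mem_Icc hsub2 le_rfl,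
            Finset.card_insert_of_notMem hnot, hc]
          omega
    · intro D hD
      simp only [Finset.mem_filter] at hD
      exact Finset.insert_erase hD.2
    · intro D' hD'
      rw [mem_pref] at hD'
      apply Finset.erase_insert
      intro h
      have := hD'.1 h
      simp only [Finset.mem_Icc] at this
      omega
    · intro D hD
      simp only [Finset.mem_filter, mem_pref] at hD
      obtain ⟨⟨hsub, hc, hcond⟩, hmem⟩ := hD
      have hmax : ∀ x ∈ D.erase (m+1), x < m + 1 := by
        intro x hx
        rw [Finset.mem_erase] at hx
        have := hsub hx.2
        simp only [Finset.mem_Icc] at this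
        omega
      have hcard : (D.erase (m+1)).card = c := by
        rw [Finset.card_erase_of_mem hmem, hc]; omega
      have hins : insert (m+1) (D.erase (m+1)) = D := Finset.insert_erase hmem
      rw [Finset.prod_Icc_succ_top (by omega)]
      have htop : ht D (c+1) = m - 2 * c := by
        have : dstep D (c+1) = m + 1 := by
          conv_lhs => rw [← hins]
          rw [← hcard]
          exact dstep_insert_max_top hmax
        rw [ht, this]
        omega
      rw [htop]
      rw [mul_comm]
      congr 1
      apply Finset.prod_congr rfl
      intro i hi
      simp only [Finset.mem_Icc] at hi
      have : dstep D i = dstep (D.erase (m+1)) i := by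
        conv_lhs => rw [← hins]
        exact dstep_insert_max hmax hi.1 (by omega)
      rw [ht, ht, this]
  · have hzero : m - 2 * c = 0 := by omega
    rw [hzero, Nat.zero_mul]
    apply Finset.sum_eq_zero
    intro D hD
    exfalso
    simp only [Finset.mem_filter, mem_pref] at hD
    obtain ⟨⟨hsub, hc, hcond⟩, hmem⟩ := hD
    have := hcond (m+1) le_rfl
    rw [filter_le_of_mem_Icc hsub le_rfl, hc] at this
    omega

lemma WS_closed (m c : ℕ) : WS m c = Nat.choose m (2 * c) * oddDF c := by
  induction m generalizing c with
  | zero =>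
    cases c with
    | zero => simp [WS_zero, oddDF]
    | succ c =>
      rw [WS, pref_nil, Nat.choose_eq_zero_of_lt (by omega)]
      simp
  | succ m ih =>
    cases c with
    | zero => simp [WS_zero, oddDF]
    | succ c =>
      rw [peel, ih, ih]
      have h1 := Nat.choose_succ_right_eq m (2 * c)
      have h2 : oddDF (c + 1) = oddDF c * (2 * c + 1) := Finset.prod_range_succ _ _
      have hc2 : 2 * (c + 1) = (2 * c + 1) + 1 := by ring
      rw [hc2, Nat.choose_succ_succ m (2 * c + 1)]
      have h3 : (m - 2 * c) * (m.choose (2 * c) * oddDF c)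
          = m.choose (2 * c + 1) * oddDF (c + 1) := by
        calc (m - 2 * c) * (m.choose (2 * c) * oddDF c)
            = (m.choose (2 * c) * (m - 2 * c)) * oddDF c := by ring
          _ = (m.choose (2 * c + 1) * (2 * c + 1)) * oddDF c := by rw [h1]
          _ = m.choose (2 * c + 1) * oddDF (c + 1) := by rw [h2]; ring
      rw [h3]
      ring

def ttf (n r : ℕ) : ℕ := (n + r).choose (2 * r) * oddDF r * (n - r).factorial

lemma oddDF_mul (r : ℕ) : oddDF r * (2 ^ r * r.factorial) = (2 * r).factorial := by
  induction r with
  | zero => simp [oddDF]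
  | succ r ih =>
    have h1 : oddDF (r + 1) = oddDF r * (2 * r + 1) := Finset.prod_range_succ _ _
    have h2 : 2 * (r + 1) = (2 * r + 1) + 1 := by ring
    rw [h1, h2, Nat.factorial_succ, Nat.factorial_succ, pow_succ]
    calc oddDF r * (2 * r + 1) * (2 ^ r * 2 * ((r + 1) * r.factorial))
        = ((2 * r + 1) + 1) * (2 * r + 1) * (oddDF r * (2 ^ r * r.factorial)) := by ring
      _ = ((2 * r + 1) + 1) * ((2 * r + 1) * (2 * r).factorial) := by rw [ih]; ring
      _ = (2 * r + 1 + 1) * (2 * r + 1).factorial := by rw [Nat.factorial_succ]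

lemma tt_key {n r : ℕ} (h : r ≤ n) : ttf n r * (2 ^ r * r.factorial) = (n + r).factorial := by
  have h2 : 2 * r ≤ n + r := by omega
  have h3 : (n + r) - 2 * r = n - r := by omega
  calc ttf n r * (2 ^ r * r.factorial)
      = (n + r).choose (2 * r) * (oddDF r * (2 ^ r * r.factorial)) * (n - r).factorial := by
        rw [ttf]; ring
    _ = (n + r).choose (2 * r) * (2 * r).factorial * (n - r).factorial := by rw [oddDF_mul]
    _ = (n + r).factorial := by
        rw [← h3]
        exact Nat.choose_mul_factorial_mul_factorial h2

lemma pow_fact_pos (r : ℕ) : 0 < 2 ^ r * r.factorial :=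
  Nat.mul_pos (Nat.pow_pos (by norm_num)) r.factorial_pos

lemma tt_succ {n r : ℕ} (h : r ≤ n) : ttf (n + 1) r = (n + 1 + r) * ttf n r := by
  apply Nat.eq_of_mul_eq_mul_right (pow_fact_pos r)
  rw [tt_key (by omega)]
  calc (n + 1 + r).factorial = (n + 1 + r) * (n + r).factorial := by
        rw [show n + 1 + r = (n + r) + 1 by ring, Nat.factorial_succ]
    _ = (n + 1 + r) * (ttf n r * (2 ^ r * r.factorial)) := by rw [tt_key h]
    _ = (n + 1 + r) * ttf n r * (2 ^ r * r.factorial) := by ring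

lemma tt_top (n : ℕ) : ttf (n + 1) (n + 1) = (2 * n + 1) * ttf n n := by
  apply Nat.eq_of_mul_eq_mul_right (pow_fact_pos (n + 1))
  rw [tt_key le_rfl]
  have e1 : (n + 1) + (n + 1) = (2 * n + 1) + 1 := by ring
  rw [e1, Nat.factorial_succ, pow_succ, Nat.factorial_succ]
  calc (2 * n + 1 + 1) * (2 * n + 1).factorial
      = (2 * n + 1 + 1) * ((2 * n + 1) * (2 * n).factorial) := by
        rw [show 2 * n + 1 = (2 * n) + 1 from rfl, Nat.factorial_succ]
    _ = (2 * n + 1 + 1) * ((2 * n + 1) * (ttf n n * (2 ^ n * n.factorial))) := by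
        rw [show (2 : ℕ) * n = n + n by ring, ← tt_key (le_refl n)]
    _ = (2 * n + 1) * ttf n n * (2 ^ n * 2 * ((n + 1) * n.factorial)) := by ring

lemma tt_tel {n r : ℕ} (h : r + 1 ≤ n) : 2 * (r + 1) * ttf n (r + 1) = (n + 1 + r) * ttf n r := by
  apply Nat.eq_of_mul_eq_mul_right (pow_fact_pos r)
  calc 2 * (r + 1) * ttf n (r + 1) * (2 ^ r * r.factorial)
      = ttf n (r + 1) * (2 ^ (r + 1) * (r + 1).factorial) := by
        rw [pow_succ, Nat.factorial_succ]; ring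
    _ = (n + (r + 1)).factorial := tt_key h
    _ = (n + 1 + r) * (n + r).factorial := by
        rw [show n + (r + 1) = (n + r) + 1 by ring, Nat.factorial_succ]
        ring_nf
    _ = (n + 1 + r) * (ttf n r * (2 ^ r * r.factorial)) := by rw [tt_key (by omega)]
    _ = (n + 1 + r) * ttf n r * (2 ^ r * r.factorial) := by ring

lemma tt_sum (n : ℕ) : ∑ r ∈ Finset.range (n + 1), ttf n r = 2 ^ n * n.factorial := by
  induction n with
  | zero => simp [ttf, oddDF]
  | succ n ih =>
    have step : ∑ r ∈ Finset.range (n + 2), ttf (n + 1) r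
        = 2 * (n + 1) * ∑ r ∈ Finset.range (n + 1), ttf n r := by
      zify
      set T : ℕ → ℤ := fun r => (ttf n r : ℤ) with hT
      have e0 : ∑ r ∈ Finset.range (n + 2), (ttf (n + 1) r : ℤ)
          = (∑ r ∈ Finset.range (n + 1), ((n : ℤ) + 1 + r) * T r) + (2 * n + 1) * T n := by
        rw [Finset.sum_range_succ]
        congr 1
        · apply Finset.sum_congr rfl
          intro r hr
          rw [Finset.mem_range] at hr
          have := tt_succ (n := n) (r := r) (by omega)
          rw [this]
          push_cast
          ring
        · have := tt_top n
          rw [this]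
          push_cast
          ring
      rw [e0]
      have tel : ∑ r ∈ Finset.range n,
          ((2 * ((r : ℤ) + 1)) * T (r + 1) - (2 * r) * T r) = 2 * n * T n - 0 := by
        have := Finset.sum_range_sub (fun r => (2 * (r : ℤ)) * T r) n
        simpa using this
      have e1 : ∑ r ∈ Finset.range n, ((n : ℤ) + 1 - r) * T r = 2 * n * T n := by
        rw [← sub_zero (2 * (n : ℤ) * T n), ← tel]
        apply Finset.sum_congr rfl
        intro r hr
        rw [Finset.mem_range] at hr
        have := tt_tel (n := n) (r := r) (by omega)
        have h2 : ((2 * (r + 1) * ttf n (r + 1) : ℕ) : ℤ) = (((n + 1 + r) * ttf n r : ℕ) : ℤ) := by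
          exact_mod_cast this
        push_cast at h2
        have : (2 * ((r : ℤ) + 1)) * T (r + 1) = ((n : ℤ) + 1 + r) * T r := by
          rw [hT]; push_cast; linarith [h2]
        rw [this]
        ring
      have e2 : ∑ r ∈ Finset.range (n + 1), ((n : ℤ) + 1 - r) * T r = (2 * n + 1) * T n := by
        rw [Finset.sum_range_succ, e1]
        push_cast
        ring
      have e3 : ∑ r ∈ Finset.range (n + 1), (2 * ((n : ℤ) + 1)) * T r
          = (∑ r ∈ Finset.range (n + 1), ((n : ℤ) + 1 + r) * T r)
            + ∑ r ∈ Finset.range (n + 1), ((n : ℤ) + 1 - r) * T r := by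
        rw [← Finset.sum_add_distrib]
        apply Finset.sum_congr rfl
        intro r hr
        ring
      have e4 : ∑ r ∈ Finset.range (n + 1), (2 * ((n : ℤ) + 1)) * T r
          = 2 * ((n : ℤ) + 1) * ∑ r ∈ Finset.range (n + 1), T r := by
        rw [Finset.mul_sum]
      push_cast
      rw [e2] at e3
      have : (2 * ((n:ℤ) + 1)) * ∑ r ∈ Finset.range (n + 1), T r
          = (∑ r ∈ Finset.range (n + 1), ((n : ℤ) + 1 + r) * T r) + (2 * n + 1) * T n := by
        rw [← e4, e3]
      linarith [this]
    rw [step, ih, Nat.factorial_succ, pow_succ]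
    ring

lemma mem_dyckPaths {L : ℕ} {D : Finset ℕ} : D ∈ dyckPaths L ↔ IsDyck L D := by
  simp [dyckPaths, IsDyck, and_assoc]

lemma dstep_mem {D : Finset ℕ} {i : ℕ} (h1 : 1 ≤ i) (h2 : i ≤ D.card) :
    dstep D i ∈ D := by
  have hl : i - 1 < (D.sort (· ≤ ·)).length := by rw [Finset.length_sort]; omega
  rw [dstep, List.getD_eq_getElem _ _ hl]
  exact (Finset.mem_sort _).mp (List.getElem_mem hl)

lemma sort_union_run (t : ℕ) : ∀ (D' : Finset ℕ) (u : ℕ), (∀ x ∈ D', x ≤ u) →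
    (D' ∪ Finset.Ioc u (u + t)).sort (· ≤ ·)
      = D'.sort (· ≤ ·) ++ List.range' (u + 1) t := by
  induction t with
  | zero => intro D' u h; simp
  | succ t ih =>
    intro D' u h
    have hun : D' ∪ Finset.Ioc u (u + (t+1)) = insert (u + t + 1) (D' ∪ Finset.Ioc u (u + t)) := by
      ext x
      simp only [Finset.mem_union, Finset.mem_Ioc, Finset.mem_insert]
      constructor
      · rintro (hx | hx)
        · exact Or.inr (Or.inl hx)
        · rcases Nat.lt_or_ge x (u + t + 1) with h2 | h2
          · exact Or.inr (Or.inr ⟨hx.1, by omega⟩)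
          · left; omega
      · rintro (rfl | hx | hx)
        · right; omega
        · exact Or.inl hx
        · right; omega
    have hrc : List.range' (u + 1) (t + 1) = List.range' (u + 1) t ++ [u + t + 1] := by
      rw [List.range'_concat]
      congr 1
      simp only [List.cons.injEq, and_true]
      omega
    rw [hun, sort_append_max, ih D' u h, hrc, List.append_assoc]
    · intro x hx
      rcases Finset.mem_union.mp hx with hx | hx
      · have := h x hx; omega
      · rw [Finset.mem_Ioc] at hx; omega

lemma prod_Ioc_fact {r n : ℕ} (h : r ≤ n) :
    ∏ i ∈ Finset.Ioc r n, (n + 1 - i) = (n - r).factorial := by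
  rw [← Finset.prod_range_add_one_eq_factorial]
  refine Finset.prod_nbij' (fun i => n - i) (fun j => n - j) ?_ ?_ ?_ ?_ ?_
  · intro i hi
    rw [Finset.mem_Ioc] at hi
    rw [Finset.mem_range]
    omega
  · intro j hj
    rw [Finset.mem_range] at hj
    rw [Finset.mem_Ioc]
    omega
  · intro i hi
    rw [Finset.mem_Ioc] at hi
    omega
  · intro j hj
    rw [Finset.mem_range] at hj
    omega
  · intro i hi
    rw [Finset.mem_Ioc] at hi
    omega

section weight
variable {n r : ℕ} {D' : Finset ℕ}

lemma dstep_union_low (hr : r ≤ n) (hD' : D' ∈ pref (n + r) r) {i : ℕ}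
    (h1 : 1 ≤ i) (h2 : i ≤ r) :
    dstep (D' ∪ Finset.Ioc (n + 1 + r) (2 * n + 2)) i = dstep D' i := by
  obtain ⟨hsub, hcard, -⟩ := mem_pref.mp hD'
  have hle : ∀ x ∈ D', x ≤ n + 1 + r := by
    intro x hx; have := hsub hx; rw [Finset.mem_Icc] at this; omega
  have he : Finset.Ioc (n + 1 + r) (2 * n + 2)
      = Finset.Ioc (n + 1 + r) ((n + 1 + r) + (n + 1 - r)) := by
    congr 1; omega
  rw [dstep, he, sort_union_run _ _ _ hle, List.getD_append]
  · rfl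
  · rw [Finset.length_sort, hcard]; omega

lemma dstep_union_high (hr : r ≤ n) (hD' : D' ∈ pref (n + r) r) {i : ℕ}
    (h1 : r < i) (h2 : i ≤ n + 1) :
    dstep (D' ∪ Finset.Ioc (n + 1 + r) (2 * n + 2)) i = n + 1 + r + (i - r) := by
  obtain ⟨hsub, hcard, -⟩ := mem_pref.mp hD'
  have hle : ∀ x ∈ D', x ≤ n + 1 + r := by
    intro x hx; have := hsub hx; rw [Finset.mem_Icc] at this; omega
  have he : Finset.Ioc (n + 1 + r) (2 * n + 2)
      = Finset.Ioc (n + 1 + r) ((n + 1 + r) + (n + 1 - r)) := by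
    congr 1; omega
  rw [dstep, he, sort_union_run _ _ _ hle, List.getD_append_right]
  · have hlt : i - 1 - (D'.sort (· ≤ ·)).length < (List.range' (n + 1 + r + 1) (n + 1 - r)).length := by
      rw [List.length_range', Finset.length_sort, hcard]; omega
    rw [List.getD_eq_getElem _ _ hlt, List.getElem_range']
    rw [Finset.length_sort, hcard]
    omega
  · rw [Finset.length_sort, hcard]; omega

lemma weight_eq (hr : r ≤ n) (hD' : D' ∈ pref (n + r) r) :
    ∏ i ∈ Finset.Icc 1 n, hstar (2 * n + 2) (D' ∪ Finset.Ioc (n + 1 + r) (2 * n + 2)) i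
      = (∏ i ∈ Finset.Icc 1 r, ht D' i) * (n - r).factorial := by
  obtain ⟨hsub, hcard, -⟩ := mem_pref.mp hD'
  set β := D' ∪ Finset.Ioc (n + 1 + r) (2 * n + 2) with hβ
  have hunotin : (n + 1 + r) ∉ β := by
    rw [hβ, Finset.mem_union]
    rintro (h | h)
    · have := hsub h; rw [Finset.mem_Icc] at this; omega
    · rw [Finset.mem_Ioc] at h; omega
  have hlow : ∀ i ∈ Finset.Icc 1 r, hstar (2 * n + 2) β i = ht D' i := by
    intro i hi
    rw [Finset.mem_Icc] at hi
    have hd := dstep_union_low hr hD' hi.1 hi.2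
    have hdmem : dstep D' i ∈ D' := dstep_mem hi.1 (by omega)
    have hdle : dstep D' i ≤ n + r := by
      have := hsub hdmem; rw [Finset.mem_Icc] at this; omega
    rw [hstar, if_neg, ht, hd]
    · rw [ht]
    · intro hsubs
      exact hunotin (hsubs (by rw [Finset.mem_Ioc, hd]; omega))
  have hhigh : ∀ i ∈ Finset.Ioc r n, hstar (2 * n + 2) β i = n + 1 - i := by
    intro i hi
    rw [Finset.mem_Ioc] at hi
    have hd := dstep_union_high hr hD' hi.1 (by omega)
    rw [hstar, if_pos, ht, hd]
    · omega
    · intro x hx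
      rw [Finset.mem_Ioc, hd] at hx
      rw [hβ, Finset.mem_union, Finset.mem_Ioc]
      right
      omega
  have hsplit : Finset.Icc 1 n = Finset.Ioc 0 n := (Finset.Icc_add_one_left_eq_Ioc 0 n)
  rw [hsplit, ← Finset.prod_Ioc_consecutive _ (Nat.zero_le r) hr]
  congr 1
  · rw [← Finset.Icc_add_one_left_eq_Ioc]
    exact Finset.prod_congr rfl (fun i hi => hlow i hi)
  · rw [Finset.prod_congr rfl hhigh]
    exact prod_Ioc_fact hr

end weight

section bsum
variable {n : ℕ}

noncomputable def uval (n : ℕ) (β : Finset ℕ) : ℕ :=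
  WithBot.unbotD 0 ((Finset.Icc 1 (2 * n + 2)) \ β).max

lemma dyck_basic {β : Finset ℕ} (hβ : β ∈ dyckPaths (2 * n + 2)) :
    β ⊆ Finset.Icc 1 (2 * n + 2) ∧ β.card = n + 1 ∧
      ∀ k ≤ 2 * n + 2, 2 * (β.filter (· ≤ k)).card ≤ k := by
  rw [mem_dyckPaths, IsDyck] at hβ
  exact ⟨hβ.1, by omega, hβ.2.2⟩

lemma compl_nonempty {β : Finset ℕ} (hβ : β ∈ dyckPaths (2 * n + 2)) :
    ((Finset.Icc 1 (2 * n + 2)) \ β).Nonempty := by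
  obtain ⟨hsub, hcard, -⟩ := dyck_basic hβ
  rw [← Finset.card_pos, Finset.card_sdiff_of_subset hsub, hcard, Nat.card_Icc]
  omega

lemma uval_spec {β : Finset ℕ} (hβ : β ∈ dyckPaths (2 * n + 2)) :
    uval n β ∈ (Finset.Icc 1 (2 * n + 2)) \ β ∧
      ∀ x ∈ (Finset.Icc 1 (2 * n + 2)) \ β, x ≤ uval n β := by
  have hne := compl_nonempty hβ
  have hmax : uval n β = ((Finset.Icc 1 (2 * n + 2)) \ β).max' hne := by
    rw [uval, ← Finset.coe_max' hne]
    rfl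
  rw [hmax]
  exact ⟨Finset.max'_mem _ _, fun x hx => Finset.le_max' _ x hx⟩

lemma uval_props {β : Finset ℕ} (hβ : β ∈ dyckPaths (2 * n + 2)) :
    n + 1 ≤ uval n β ∧ uval n β ≤ 2 * n + 1 ∧ uval n β ∉ β ∧
      Finset.Ioc (uval n β) (2 * n + 2) ⊆ β := by
  obtain ⟨hsub, hcard, hcond⟩ := dyck_basic hβ
  obtain ⟨hmem, hmaxi⟩ := uval_spec hβ
  rw [Finset.mem_sdiff, Finset.mem_Icc] at hmem
  set u := uval n β with hu
  have hIoc : Finset.Ioc u (2 * n + 2) ⊆ β := by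
    intro x hx
    rw [Finset.mem_Ioc] at hx
    by_contra hxβ
    have : x ≤ u := hmaxi x (by
      rw [Finset.mem_sdiff, Finset.mem_Icc]
      exact ⟨⟨by omega, hx.2⟩, hxβ⟩)
    omega
  have hule : u ≤ 2 * n + 1 := by
    by_contra h
    have hu2 : u = 2 * n + 2 := by omega
    have hfil : β.filter (· ≤ 2 * n + 1) = β := by
      apply Finset.filter_true_of_mem
      intro x hx
      have h1 := hsub hx
      rw [Finset.mem_Icc] at h1
      have : x ≠ 2 * n + 2 := by
        rintro rfl
        exact hmem.2 (hu2 ▸ hx)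
      omega
    have := hcond (2 * n + 1) (by omega)
    rw [hfil, hcard] at this
    omega
  have huge : n + 1 ≤ u := by
    have h1 : (Finset.Ioc u (2 * n + 2)).card ≤ β.card := Finset.card_le_card hIoc
    rw [Nat.card_Ioc, hcard] at h1
    omega
  exact ⟨huge, hule, hmem.2, hIoc⟩

lemma dyck_split {β : Finset ℕ} (hβ : β ∈ dyckPaths (2 * n + 2)) :
    β = β.filter (· ≤ uval n β - 1) ∪ Finset.Ioc (uval n β) (2 * n + 2) := by
  obtain ⟨hsub, hcard, hcond⟩ := dyck_basic hβ
  obtain ⟨huge, hule, hnot, hIoc⟩ := uval_props hβ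
  ext x
  simp only [Finset.mem_union, Finset.mem_filter, Finset.mem_Ioc]
  constructor
  · intro hx
    have h1 := hsub hx
    rw [Finset.mem_Icc] at h1
    have hne : x ≠ uval n β := by rintro rfl; exact hnot hx
    rcases Nat.lt_or_ge x (uval n β) with h | h
    · left; exact ⟨hx, by omega⟩
    · right; omega
  · rintro (⟨hx, -⟩ | hx)
    · exact hx
    · exact hIoc (Finset.mem_Ioc.mpr hx)

lemma dyck_filter_mem {β : Finset ℕ} (hβ : β ∈ dyckPaths (2 * n + 2)) :
    β.filter (· ≤ uval n β - 1) ∈ pref (uval n β - 1) (uval n β - (n + 1)) := by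
  obtain ⟨hsub, hcard, hcond⟩ := dyck_basic hβ
  obtain ⟨huge, hule, hnot, hIoc⟩ := uval_props hβ
  set u := uval n β with hu
  rw [mem_pref]
  have hdis : Disjoint (β.filter (· ≤ u - 1)) (Finset.Ioc u (2 * n + 2)) := by
    rw [Finset.disjoint_left]
    intro x hx hx2
    rw [Finset.mem_filter] at hx
    rw [Finset.mem_Ioc] at hx2
    omega
  have hcards : (β.filter (· ≤ u - 1)).card + (2 * n + 2 - u) = n + 1 := by
    have := dyck_split hβ
    rw [← hu] at this
    have h2 : β.card = (β.filter (· ≤ u - 1)).card + (Finset.Ioc u (2 * n + 2)).card := by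
      rw [← Finset.card_union_of_disjoint hdis, ← this]
    rw [hcard, Nat.card_Ioc] at h2
    omega
  refine ⟨?_, by omega, ?_⟩
  · intro x hx
    rw [Finset.mem_filter] at hx
    have := hsub hx.1
    rw [Finset.mem_Icc] at this ⊢
    exact ⟨this.1, hx.2⟩
  · intro k hk
    have he : (β.filter (· ≤ u - 1)).filter (· ≤ k) = β.filter (· ≤ k) := by
      ext x
      simp only [Finset.mem_filter]
      constructor
      · rintro ⟨⟨h1, -⟩, h3⟩; exact ⟨h1, h3⟩
      · rintro ⟨h1, h2⟩; exact ⟨⟨h1, by omega⟩, h2⟩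
    rw [he]
    exact hcond k (by omega)

lemma union_mem_dyck {r : ℕ} {D' : Finset ℕ} (hr : r ≤ n) (hD' : D' ∈ pref (n + r) r) :
    D' ∪ Finset.Ioc (n + 1 + r) (2 * n + 2) ∈ dyckPaths (2 * n + 2) := by
  obtain ⟨hsub, hcard, hcond⟩ := mem_pref.mp hD'
  have hDle : ∀ x ∈ D', 1 ≤ x ∧ x ≤ n + r := by
    intro x hx; have := hsub hx; rw [Finset.mem_Icc] at this; exact this
  have hdis : Disjoint D' (Finset.Ioc (n + 1 + r) (2 * n + 2)) := by
    rw [Finset.disjoint_left]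
    intro x hx hx2
    rw [Finset.mem_Ioc] at hx2
    have := hDle x hx
    omega
  rw [mem_dyckPaths, IsDyck]
  refine ⟨?_, ?_, ?_⟩
  · intro x hx
    rcases Finset.mem_union.mp hx with hx | hx
    · have := hDle x hx; rw [Finset.mem_Icc]; omega
    · rw [Finset.mem_Ioc] at hx; rw [Finset.mem_Icc]; omega
  · rw [Finset.card_union_of_disjoint hdis, hcard, Nat.card_Ioc]
    omega
  · intro k hk
    rcases le_or_gt k (n + r) with hcase | hcase
    · have he : (D' ∪ Finset.Ioc (n + 1 + r) (2 * n + 2)).filter (· ≤ k) = D'.filter (· ≤ k) := by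
        ext x
        simp only [Finset.mem_filter, Finset.mem_union, Finset.mem_Ioc]
        constructor
        · rintro ⟨hx | hx, h2⟩
          · exact ⟨hx, h2⟩
          · omega
        · rintro ⟨hx, h2⟩; exact ⟨Or.inl hx, h2⟩
      rw [he]
      exact hcond k hcase
    · have he : (D' ∪ Finset.Ioc (n + 1 + r) (2 * n + 2)).filter (· ≤ k)
          = D' ∪ Finset.Ioc (n + 1 + r) k := by
        ext x
        simp only [Finset.mem_filter, Finset.mem_union, Finset.mem_Ioc]
        constructor
        · rintro ⟨hx | hx, h2⟩
          · exact Or.inl hx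
          · right; omega
        · rintro (hx | hx)
          · have := hDle x hx; exact ⟨Or.inl hx, by omega⟩
          · exact ⟨Or.inr ⟨hx.1, by omega⟩, hx.2⟩
      have hdis2 : Disjoint D' (Finset.Ioc (n + 1 + r) k) := by
        rw [Finset.disjoint_left]
        intro x hx hx2
        rw [Finset.mem_Ioc] at hx2
        have := hDle x hx
        omega
      rw [he, Finset.card_union_of_disjoint hdis2, hcard, Nat.card_Ioc]
      omega

lemma beta_sum (n : ℕ) :
    ∑ β ∈ dyckPaths (2 * n + 2), ∏ i ∈ Finset.Icc 1 n, hstar (2 * n + 2) β i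
      = ∑ r ∈ Finset.range (n + 1), WS (n + r) r * (n - r).factorial := by
  classical
  have hrhs : ∀ r, WS (n + r) r * (n - r).factorial
      = ∑ D' ∈ pref (n + r) r, (∏ i ∈ Finset.Icc 1 r, ht D' i) * (n - r).factorial := by
    intro r
    rw [WS, Finset.sum_mul]
  simp only [hrhs]
  rw [Finset.sum_sigma' (Finset.range (n + 1)) (fun r => pref (n + r) r)
    (fun r D' => (∏ i ∈ Finset.Icc 1 r, ht D' i) * (n - r).factorial)]
  symm
  refine Finset.sum_bij' (fun a ha => a.2 ∪ Finset.Ioc (n + 1 + a.1) (2 * n + 2))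
    (fun β hβ => ⟨uval n β - (n + 1), β.filter (· ≤ uval n β - 1)⟩) ?_ ?_ ?_ ?_ ?_
  · intro a ha
    rw [Finset.mem_sigma, Finset.mem_range] at ha
    exact union_mem_dyck (by omega) ha.2
  · intro β hβ
    rw [Finset.mem_sigma, Finset.mem_range]
    obtain ⟨huge, hule, -, -⟩ := uval_props hβ
    dsimp only
    constructor
    · omega
    · have h := dyck_filter_mem hβ
      have he : n + (uval n β - (n + 1)) = uval n β - 1 := by omega
      rw [he]
      exact h
  · rintro ⟨r, D'⟩ ha
    rw [Finset.mem_sigma, Finset.mem_range] at ha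
    obtain ⟨hr, hD'⟩ := ha
    dsimp only at hr hD' ⊢
    have hr' : r ≤ n := by omega
    set β := D' ∪ Finset.Ioc (n + 1 + r) (2 * n + 2) with hβdef
    have hβ : β ∈ dyckPaths (2 * n + 2) := union_mem_dyck hr' hD'
    obtain ⟨hsub, hcard, -⟩ := mem_pref.mp hD'
    have hDle : ∀ x ∈ D', 1 ≤ x ∧ x ≤ n + r := by
      intro x hx; have := hsub hx; rw [Finset.mem_Icc] at this; exact this
    have huv : uval n β = n + 1 + r := by
      obtain ⟨hmem, hmaxi⟩ := uval_spec hβ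
      rw [Finset.mem_sdiff, Finset.mem_Icc] at hmem
      have h1 : n + 1 + r ∈ (Finset.Icc 1 (2 * n + 2)) \ β := by
        rw [Finset.mem_sdiff, Finset.mem_Icc]
        refine ⟨⟨by omega, by omega⟩, ?_⟩
        rw [hβdef, Finset.mem_union]
        rintro (h | h)
        · have := hDle _ h; omega
        · rw [Finset.mem_Ioc] at h; omega
      have h2 := hmaxi _ h1
      have h3 : uval n β ≤ n + 1 + r := by
        by_contra h
        have hin : uval n β ∈ Finset.Ioc (n + 1 + r) (2 * n + 2) := by
          rw [Finset.mem_Ioc]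
          exact ⟨by omega, hmem.1.2⟩
        exact hmem.2 (Finset.mem_union_right _ hin)
      omega
    have hfil : β.filter (· ≤ uval n β - 1) = D' := by
      rw [huv]
      ext x
      simp only [Finset.mem_filter, hβdef, Finset.mem_union, Finset.mem_Ioc]
      constructor
      · rintro ⟨hx | hx, h2⟩
        · exact hx
        · omega
      · intro hx
        have := hDle x hx
        exact ⟨Or.inl hx, by omega⟩
    have he1 : uval n β - (n + 1) = r := by omega
    rw [he1, hfil]
  · intro β hβ
    obtain ⟨huge, hule, -, -⟩ := uval_props hβ
    have he : n + 1 + (uval n β - (n + 1)) = uval n β := by omega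
    dsimp only
    rw [he]
    exact (dyck_split hβ).symm
  · rintro ⟨r, D'⟩ ha
    rw [Finset.mem_sigma, Finset.mem_range] at ha
    exact (weight_eq (by omega) ha.2).symm

end bsum


/-- the number of permutations of `{1,…,2n}` equals the sum over pairs of
Dyck paths `α` (length `2n`) and `β` (length `2n+2`) of `∏_{i=1}^n h_i(α) h_i^*(β)`. -/
theorem stmt0 (n : ℕ) :
    Fintype.card (Equiv.Perm (Fin (2 * n))) =
      ∑ α ∈ dyckPaths (2 * n), ∑ β ∈ dyckPaths (2 * n + 2),
        ∏ i ∈ Finset.Icc 1 n, ht α i * hstar (2 * n + 2) β i := by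
  classical
  have halpha : ∑ α ∈ dyckPaths (2 * n), ∏ i ∈ Finset.Icc 1 n, ht α i = oddDF n := by
    have hset : dyckPaths (2 * n) = pref (2 * n) n := by
      ext D
      rw [mem_dyckPaths, IsDyck, mem_pref]
      constructor
      · rintro ⟨h1, h2, h3⟩; exact ⟨h1, by omega, h3⟩
      · rintro ⟨h1, h2, h3⟩; exact ⟨h1, by omega, h3⟩
    rw [hset]
    have hcl := WS_closed (2 * n) n
    rw [WS] at hcl
    rw [hcl, Nat.choose_self, one_mul]
  have hbeta : ∑ β ∈ dyckPaths (2 * n + 2), ∏ i ∈ Finset.Icc 1 n, hstar (2 * n + 2) β i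
      = 2 ^ n * n.factorial := by
    rw [beta_sum n]
    have hterm : ∀ r ∈ Finset.range (n + 1),
        WS (n + r) r * (n - r).factorial = ttf n r := by
      intro r _
      rw [WS_closed, ttf]
    rw [Finset.sum_congr rfl hterm, tt_sum]
  calc Fintype.card (Equiv.Perm (Fin (2 * n))) = (2 * n).factorial := by
        rw [Fintype.card_perm, Fintype.card_fin]
    _ = oddDF n * (2 ^ n * n.factorial) := (oddDF_mul n).symm
    _ = (∑ α ∈ dyckPaths (2 * n), ∏ i ∈ Finset.Icc 1 n, ht α i)
        * (∑ β ∈ dyckPaths (2 * n + 2), ∏ i ∈ Finset.Icc 1 n, hstar (2 * n + 2) β i) := by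
        rw [halpha, hbeta]
    _ = ∑ α ∈ dyckPaths (2 * n), ∑ β ∈ dyckPaths (2 * n + 2),
        (∏ i ∈ Finset.Icc 1 n, ht α i) * ∏ i ∈ Finset.Icc 1 n, hstar (2 * n + 2) β i :=
        Finset.sum_mul_sum _ _ _ _
    _ = ∑ α ∈ dyckPaths (2 * n), ∑ β ∈ dyckPaths (2 * n + 2),
        ∏ i ∈ Finset.Icc 1 n, ht α i * hstar (2 * n + 2) β i := by
        refine Finset.sum_congr rfl fun α _ => Finset.sum_congr rfl fun β _ => ?_
        rw [Finset.prod_mul_distrib]
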